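/- Let g ∈ L¹(0,T;ℝ) be nonnegative and let δ < 2 with δ ≠ 1. Then the double integral ∫₀ᵀ ∫₀ᵀ |t−s|^{−δ} (∫_{min(t,s)}^{max(t,s)} g(r) dr) dt ds is finite. -/

import Mathlib

open MeasureTheory Set
open scoped ENNReal

lemma oneDimBound (T : ℝ) (a : ℝ) (ha0 : 0 ≤ a) (ha1 : a < 1)
    {r : ℝ} (hr : r ∈ Set.Icc 0 T) :
    ∫⁻ t in Set.Icc 0 T, ENNReal.ofReal (|t - r| ^ (-a)) ≤
      ENNReal.ofReal (T ^ (1 - a) / (1 - a) + T ^ (1 - a) / (1 - a)) := by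
  obtain ⟨hr0, hrT⟩ := hr
  have hT0 : (0:ℝ) ≤ T := le_trans hr0 hrT
  have hne : (-1:ℝ) < -a := by linarith
  have h1a : (0:ℝ) < 1 - a := by linarith
  have int1 : IntegrableOn (fun t => (r - t) ^ (-a)) (Set.Icc 0 r) := by
    have base : IntervalIntegrable (fun x : ℝ => x ^ (-a)) volume 0 r :=
      intervalIntegral.intervalIntegrable_rpow' hne
    have h2 := (base.comp_sub_left r).symm
    rw [sub_zero, sub_self] at h2
    rw [integrableOn_Icc_iff_integrableOn_Ioc]
    exact (intervalIntegrable_iff_integrableOn_Ioc_of_le hr0).1 h2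
  have int2 : IntegrableOn (fun t => (t - r) ^ (-a)) (Set.Ioc r T) := by
    have base : IntervalIntegrable (fun x : ℝ => x ^ (-a)) volume 0 (T - r) :=
      intervalIntegral.intervalIntegrable_rpow' hne
    have h2 := base.comp_sub_right r
    rw [zero_add, sub_add_cancel] at h2
    exact (intervalIntegrable_iff_integrableOn_Ioc_of_le hrT).1 h2
  have val1 : ∫ t in Set.Icc 0 r, (r - t) ^ (-a) ≤ T ^ (1 - a) / (1 - a) := by
    have e1 : ∫ t in Set.Icc 0 r, (r - t) ^ (-a) = ∫ t in (0:ℝ)..r, (r - t) ^ (-a) := by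
      rw [intervalIntegral.integral_of_le hr0, integral_Icc_eq_integral_Ioc]
    rw [e1, intervalIntegral.integral_comp_sub_left (fun x : ℝ => x ^ (-a)) r,
      sub_self, sub_zero, integral_rpow (Or.inl hne), Real.zero_rpow (by linarith), sub_zero,
      show -a + 1 = 1 - a by ring]
    exact (div_le_div_iff_of_pos_right h1a).2 (Real.rpow_le_rpow hr0 hrT h1a.le)
  have val2 : ∫ t in Set.Ioc r T, (t - r) ^ (-a) ≤ T ^ (1 - a) / (1 - a) := by
    have e1 : ∫ t in Set.Ioc r T, (t - r) ^ (-a) = ∫ t in r..T, (t - r) ^ (-a) := by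
      rw [intervalIntegral.integral_of_le hrT]
    rw [e1, intervalIntegral.integral_comp_sub_right (fun x : ℝ => x ^ (-a)) r,
      sub_self, integral_rpow (Or.inl hne), Real.zero_rpow (by linarith), sub_zero,
      show -a + 1 = 1 - a by ring]
    exact (div_le_div_iff_of_pos_right h1a).2 (Real.rpow_le_rpow (by linarith) (by linarith) h1a.le)
  -- split the lintegral
  have hsplit : Set.Icc 0 T = Set.Icc 0 r ∪ Set.Ioc r T := (Set.Icc_union_Ioc_eq_Icc hr0 hrT).symm
  have hdisj : Disjoint (Set.Icc 0 r) (Set.Ioc r T) := by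
    exact (Set.Iic_disjoint_Ioc le_rfl).mono Set.Icc_subset_Iic_self le_rfl
  rw [hsplit, lintegral_union measurableSet_Ioc hdisj]
  have b1 : ∫⁻ t in Set.Icc 0 r, ENNReal.ofReal (|t - r| ^ (-a)) ≤
      ENNReal.ofReal (T ^ (1 - a) / (1 - a)) := by
    have e : ∫⁻ t in Set.Icc 0 r, ENNReal.ofReal (|t - r| ^ (-a)) =
        ∫⁻ t in Set.Icc 0 r, ENNReal.ofReal ((r - t) ^ (-a)) := by
      refine setLIntegral_congr_fun measurableSet_Icc ?_
      intro t ht; dsimp only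
      rw [abs_of_nonpos (by linarith [ht.2] : t - r ≤ 0), neg_sub]
    rw [e, ← ofReal_integral_eq_lintegral_ofReal int1
      (((ae_restrict_iff' measurableSet_Icc).2 (Filter.Eventually.of_forall fun t ht =>
        Real.rpow_nonneg (by linarith [ht.2]) _)))]
    exact ENNReal.ofReal_le_ofReal val1
  have b2 : ∫⁻ t in Set.Ioc r T, ENNReal.ofReal (|t - r| ^ (-a)) ≤
      ENNReal.ofReal (T ^ (1 - a) / (1 - a)) := by
    have e : ∫⁻ t in Set.Ioc r T, ENNReal.ofReal (|t - r| ^ (-a)) =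
        ∫⁻ t in Set.Ioc r T, ENNReal.ofReal ((t - r) ^ (-a)) := by
      refine setLIntegral_congr_fun measurableSet_Ioc ?_
      intro t ht; dsimp only
      rw [abs_of_nonneg (by linarith [ht.1] : (0:ℝ) ≤ t - r)]
    rw [e, ← ofReal_integral_eq_lintegral_ofReal int2
      (((ae_restrict_iff' measurableSet_Ioc).2 (Filter.Eventually.of_forall fun t ht =>
        Real.rpow_nonneg (by linarith [ht.1]) _)))]
    exact ENNReal.ofReal_le_ofReal val2
  calc _ ≤ ENNReal.ofReal (T ^ (1 - a) / (1 - a)) + ENNReal.ofReal (T ^ (1 - a) / (1 - a)) :=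
        add_le_add b1 b2
    _ = _ := by rw [← ENNReal.ofReal_add (by positivity) (by positivity)]

theorem aux (T : ℝ) (hT : 0 < T) (δ : ℝ) (hδ : δ < 2)
    (g : ℝ → ℝ) (hgm : Measurable g) (hg : IntegrableOn g (Set.Icc 0 T))
    (hg0 : ∀ r, 0 ≤ g r) :
    IntegrableOn
      (fun p : ℝ × ℝ => |p.1 - p.2| ^ (-δ) * ∫ r in (min p.1 p.2)..(max p.1 p.2), g r)
      (Set.Icc 0 T ×ˢ Set.Icc 0 T) := by
  set S : Set (ℝ × ℝ) := Set.Icc 0 T ×ˢ Set.Icc 0 T with hS_def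
  have hS : MeasurableSet S := measurableSet_Icc.prod measurableSet_Icc
  set F : ℝ × ℝ → ℝ :=
    fun p => |p.1 - p.2| ^ (-δ) * ∫ r in (min p.1 p.2)..(max p.1 p.2), g r with hF_def
  set c : ℝ × ℝ → ℝ≥0∞ := fun p => ENNReal.ofReal (|p.1 - p.2| ^ (-δ)) with hc_def
  have hcm : Measurable c := by fun_prop
  set φ : ℝ → ℝ≥0∞ := fun r => ENNReal.ofReal (g r) with hφ_def
  have hφm : Measurable φ := hgm.ennreal_ofReal
  constructor
  · -- a.e. strong measurability
    set g' : ℝ → ℝ := (Set.Icc 0 T).indicator g with hg'_def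
    have hg' : Integrable g' := (integrable_indicator_iff measurableSet_Icc).2 hg
    set G : ℝ → ℝ := fun x => ∫ u in (0:ℝ)..x, g' u with hG_def
    have hG : Continuous G := hg'.continuous_primitive 0
    have hFeq : ∀ p ∈ S, F p = |p.1 - p.2| ^ (-δ) * (G (max p.1 p.2) - G (min p.1 p.2)) := by
      intro p hp
      have h1 : (∫ r in (min p.1 p.2)..(max p.1 p.2), g r) =
          ∫ r in (min p.1 p.2)..(max p.1 p.2), g' r := by
        refine intervalIntegral.integral_congr fun r hr => ?_
        rw [Set.uIcc_of_le min_le_max] at hr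
        exact (Set.indicator_of_mem (show r ∈ Set.Icc 0 T from
          ⟨le_trans (le_min hp.1.1 hp.2.1) hr.1, le_trans hr.2 (max_le hp.1.2 hp.2.2)⟩) g).symm
      have h2 : G (max p.1 p.2) - G (min p.1 p.2) =
          ∫ r in (min p.1 p.2)..(max p.1 p.2), g' r :=
        intervalIntegral.integral_interval_sub_left hg'.intervalIntegrable
          hg'.intervalIntegrable
      rw [hF_def]; dsimp only; rw [h1, ← h2]
    have hm' : AEStronglyMeasurable
        (fun p : ℝ × ℝ => |p.1 - p.2| ^ (-δ) * (G (max p.1 p.2) - G (min p.1 p.2)))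
        (volume.restrict S) := by
      have m1 : Measurable fun p : ℝ × ℝ => |p.1 - p.2| ^ (-δ) := by fun_prop
      have m2 : Continuous fun p : ℝ × ℝ => G (max p.1 p.2) - G (min p.1 p.2) :=
        (hG.comp (continuous_fst.max continuous_snd)).sub
          (hG.comp (continuous_fst.min continuous_snd))
      exact (m1.mul m2.measurable).aestronglyMeasurable
    refine hm'.congr ?_
    exact (ae_restrict_iff' hS).2 (Filter.Eventually.of_forall fun p hp => (hFeq p hp).symm)
  · -- finite integral
    have hF0 : ∀ p, 0 ≤ F p := fun p =>
      mul_nonneg (Real.rpow_nonneg (abs_nonneg _) _)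
        (intervalIntegral.integral_nonneg min_le_max fun u _ => hg0 u)
    rw [hasFiniteIntegral_iff_ofReal (Filter.Eventually.of_forall hF0)]
    set A : Set ((ℝ × ℝ) × ℝ) :=
      {q : (ℝ × ℝ) × ℝ | q.1 ∈ S ∧ min q.1.1 q.1.2 < q.2 ∧ q.2 ≤ max q.1.1 q.1.2} with hA_def
    have hA : MeasurableSet A := by
      have : A = ((fun q : (ℝ × ℝ) × ℝ => q.1) ⁻¹' S) ∩
          ({q : (ℝ × ℝ) × ℝ | min q.1.1 q.1.2 < q.2} ∩
            {q : (ℝ × ℝ) × ℝ | q.2 ≤ max q.1.1 q.1.2}) := rfl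
      rw [this]
      refine (hS.preimage measurable_fst).inter
        ((measurableSet_lt ?_ ?_).inter (measurableSet_le ?_ ?_)) <;> fun_prop
    set Φ : (ℝ × ℝ) × ℝ → ℝ≥0∞ := A.indicator (fun q => c q.1 * φ q.2) with hΦ_def
    have hΦm : Measurable Φ :=
      ((hcm.comp measurable_fst).mul (hφm.comp measurable_snd)).indicator hA
    set D : ℝ → Set (ℝ × ℝ) :=
      fun r => S ∩ ({p : ℝ × ℝ | min p.1 p.2 < r} ∩ {p : ℝ × ℝ | r ≤ max p.1 p.2}) with hD_def
    have hD : ∀ r, MeasurableSet (D r) := by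
      intro r
      refine hS.inter ((measurableSet_lt ?_ ?_).inter (measurableSet_le ?_ ?_)) <;> fun_prop
    have hmemA : ∀ (p : ℝ × ℝ) (r : ℝ), ((p, r) ∈ A ↔ p ∈ D r) := by
      intro p r
      exact ⟨fun h => ⟨h.1, h.2.1, h.2.2⟩, fun h => ⟨h.1, h.2.1, h.2.2⟩⟩
    -- Step 1: rewrite as iterated lintegral
    have step1 : ∫⁻ p in S, ENNReal.ofReal (F p) = ∫⁻ p, ∫⁻ r, Φ (p, r) := by
      rw [← lintegral_indicator hS]
      refine lintegral_congr fun p => ?_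
      by_cases hp : p ∈ S
      · rw [Set.indicator_of_mem hp]
        have hmin : 0 ≤ min p.1 p.2 := le_min hp.1.1 hp.2.1
        have hmax : max p.1 p.2 ≤ T := max_le hp.1.2 hp.2.2
        have hsub : Set.Ioc (min p.1 p.2) (max p.1 p.2) ⊆ Set.Icc 0 T := fun r hr =>
          ⟨le_trans hmin hr.1.le, le_trans hr.2 hmax⟩
        have hint : IntegrableOn g (Set.Ioc (min p.1 p.2) (max p.1 p.2)) := hg.mono_set hsub
        have e1 : ENNReal.ofReal (F p) =
            c p * ENNReal.ofReal (∫ r in Set.Ioc (min p.1 p.2) (max p.1 p.2), g r) := by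
          rw [hF_def]; dsimp only
          rw [intervalIntegral.integral_of_le min_le_max,
            ENNReal.ofReal_mul (Real.rpow_nonneg (abs_nonneg _) _)]
        have e2 : ∀ r, Φ (p, r) =
            (Set.Ioc (min p.1 p.2) (max p.1 p.2)).indicator (fun r => c p * φ r) r := by
          intro r
          simp only [hΦ_def]
          by_cases hr : r ∈ Set.Ioc (min p.1 p.2) (max p.1 p.2)
          · rw [Set.indicator_of_mem hr,
              Set.indicator_of_mem (show (p, r) ∈ A from ⟨hp, hr.1, hr.2⟩)]
          · rw [Set.indicator_of_notMem hr,
              Set.indicator_of_notMem (fun (hq : (p, r) ∈ A) => hr ⟨hq.2.1, hq.2.2⟩)]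
        rw [e1, ofReal_integral_eq_lintegral_ofReal hint
          ((ae_restrict_iff' measurableSet_Ioc).2 (Filter.Eventually.of_forall fun r _ => hg0 r))]
        simp_rw [e2]
        rw [lintegral_indicator measurableSet_Ioc, lintegral_const_mul _ hφm]
      · rw [Set.indicator_of_notMem hp]
        have hz : ∀ r, Φ (p, r) = 0 := by
          intro r
          simp only [hΦ_def]
          exact Set.indicator_of_notMem (fun (hq : (p, r) ∈ A) => hp hq.1) _
        simp [hz]
    -- the constant
    obtain ⟨C, hCne, hC⟩ : ∃ C : ℝ≥0∞, C ≠ ⊤ ∧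
        ∀ r ∈ Set.Icc (0:ℝ) T, ∫⁻ p, (D r).indicator c p ≤ C := by
      rcases le_or_gt δ 0 with h0 | h0
      · refine ⟨ENNReal.ofReal (T ^ (-δ)) * (ENNReal.ofReal T * ENNReal.ofReal T),
          by finiteness, fun r hr => ?_⟩
        have hb : ∀ p, (D r).indicator c p ≤
            S.indicator (fun _ => ENNReal.ofReal (T ^ (-δ))) p := by
          intro p
          by_cases hp : p ∈ D r
          · rw [Set.indicator_of_mem hp, Set.indicator_of_mem hp.1]
            refine ENNReal.ofReal_le_ofReal (Real.rpow_le_rpow (abs_nonneg _) ?_ (by linarith))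
            have h1 : (0:ℝ) ≤ p.1 := hp.1.1.1
            have h2 : p.1 ≤ T := hp.1.1.2
            have h3 : (0:ℝ) ≤ p.2 := hp.1.2.1
            have h4 : p.2 ≤ T := hp.1.2.2
            rw [abs_sub_le_iff]
            constructor <;> linarith
          · rw [Set.indicator_of_notMem hp]; exact zero_le
        calc ∫⁻ p, (D r).indicator c p
            ≤ ∫⁻ p, S.indicator (fun _ => ENNReal.ofReal (T ^ (-δ))) p := lintegral_mono hb
          _ = ENNReal.ofReal (T ^ (-δ)) * volume S := lintegral_indicator_const hS _
          _ = _ := by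
              rw [hS_def, Measure.volume_eq_prod ℝ ℝ, Measure.prod_prod, Real.volume_Icc, sub_zero]
      · set a : ℝ := δ / 2 with ha_def
        have ha0 : 0 ≤ a := by rw [ha_def]; linarith
        have ha1 : a < 1 := by rw [ha_def]; linarith
        set C₁ : ℝ≥0∞ := ENNReal.ofReal (T ^ (1 - a) / (1 - a) + T ^ (1 - a) / (1 - a)) with hC₁
        refine ⟨C₁ * C₁, by finiteness, fun r hr => ?_⟩
        set f1 : ℝ → ℝ≥0∞ :=
          fun t => (Set.Icc 0 T).indicator (fun t => ENNReal.ofReal (|t - r| ^ (-a))) t with hf1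
        have hf1m : Measurable f1 := by
          refine Measurable.indicator ?_ measurableSet_Icc
          fun_prop
        have hline1 : volume {p : ℝ × ℝ | p.1 = r} = 0 := by
          have e : {p : ℝ × ℝ | p.1 = r} = ({r} : Set ℝ) ×ˢ (Set.univ : Set ℝ) := by
            ext p
            simp only [Set.mem_setOf_eq, Set.mem_prod, Set.mem_singleton_iff, Set.mem_univ,
              and_true]
          rw [e, Measure.volume_eq_prod ℝ ℝ, Measure.prod_prod, Real.volume_singleton, zero_mul]
        have hline2 : volume {p : ℝ × ℝ | p.2 = r} = 0 := by
          have e : {p : ℝ × ℝ | p.2 = r} = (Set.univ : Set ℝ) ×ˢ ({r} : Set ℝ) := by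
            ext p
            simp only [Set.mem_setOf_eq, Set.mem_prod, Set.mem_singleton_iff, Set.mem_univ,
              true_and]
          rw [e, Measure.volume_eq_prod ℝ ℝ, Measure.prod_prod, Real.volume_singleton, mul_zero]
        have hae : ∀ᵐ p : ℝ × ℝ, p.1 ≠ r ∧ p.2 ≠ r := by
          refine Filter.Eventually.and ?_ ?_
          · exact ae_iff.2 (by simpa using hline1)
          · exact ae_iff.2 (by simpa using hline2)
        have hpt : ∀ᵐ p : ℝ × ℝ, (D r).indicator c p ≤ f1 p.1 * f1 p.2 := by
          filter_upwards [hae] with p hpne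
          obtain ⟨h1ne, h2ne⟩ := hpne
          by_cases hp : p ∈ D r
          · obtain ⟨hpS, hlt, hle⟩ := hp
            have hlt' : min p.1 p.2 < r := hlt
            have hle' : r ≤ max p.1 p.2 := hle
            rw [Set.indicator_of_mem (show p ∈ D r from ⟨hpS, hlt, hle⟩), hf1]
            dsimp only
            rw [Set.indicator_of_mem hpS.1, Set.indicator_of_mem hpS.2,
              ← ENNReal.ofReal_mul (Real.rpow_nonneg (abs_nonneg _) _)]
            refine ENNReal.ofReal_le_ofReal ?_
            have h1' : 0 < |p.1 - r| := abs_pos.2 (sub_ne_zero.2 h1ne)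
            have h2' : 0 < |p.2 - r| := abs_pos.2 (sub_ne_zero.2 h2ne)
            have hmm : max p.1 p.2 - min p.1 p.2 = |p.1 - p.2| := by
              rw [max_sub_min_eq_abs, abs_sub_comm]
            have hb1 : |p.1 - r| ≤ |p.1 - p.2| := by
              rw [← hmm, abs_sub_le_iff]
              constructor <;>
                linarith [le_max_left p.1 p.2, le_max_right p.1 p.2, min_le_left p.1 p.2,
                  min_le_right p.1 p.2, hlt'.le, hle']
            have hb2 : |p.2 - r| ≤ |p.1 - p.2| := by
              rw [← hmm, abs_sub_le_iff]
              constructor <;>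
                linarith [le_max_left p.1 p.2, le_max_right p.1 p.2, min_le_left p.1 p.2,
                  min_le_right p.1 p.2, hlt'.le, hle']
            have hts : 0 < |p.1 - p.2| := lt_of_lt_of_le h1' hb1
            calc |p.1 - p.2| ^ (-δ) = |p.1 - p.2| ^ (-a) * |p.1 - p.2| ^ (-a) := by
                  rw [← Real.rpow_add hts]; congr 1; rw [ha_def]; ring
              _ ≤ |p.1 - r| ^ (-a) * |p.2 - r| ^ (-a) :=
                  mul_le_mul (Real.rpow_le_rpow_of_nonpos h1' hb1 (by linarith))
                    (Real.rpow_le_rpow_of_nonpos h2' hb2 (by linarith))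
                    (Real.rpow_nonneg (abs_nonneg _) _) (Real.rpow_nonneg (abs_nonneg _) _)
          · rw [Set.indicator_of_notMem hp]; exact zero_le
        have hJ : ∫⁻ t, f1 t ≤ C₁ := by
          rw [hf1, lintegral_indicator measurableSet_Icc]
          exact oneDimBound T a ha0 ha1 hr
        calc ∫⁻ p, (D r).indicator c p ≤ ∫⁻ p, f1 p.1 * f1 p.2 := lintegral_mono_ae hpt
          _ = (∫⁻ t, f1 t) * (∫⁻ t, f1 t) :=
              lintegral_prod_mul hf1m.aemeasurable hf1m.aemeasurable
          _ ≤ C₁ * C₁ := mul_le_mul' hJ hJ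
    -- Step 2: swap and bound
    calc ∫⁻ p in S, ENNReal.ofReal (F p) = ∫⁻ p, ∫⁻ r, Φ (p, r) := step1
      _ = ∫⁻ r, ∫⁻ p, Φ (p, r) := lintegral_lintegral_swap hΦm.aemeasurable
      _ ≤ ∫⁻ r, C * (Set.Icc 0 T).indicator φ r := by
          refine lintegral_mono fun r => ?_
          by_cases hr : r ∈ Set.Icc (0:ℝ) T
          · rw [Set.indicator_of_mem hr]
            have e3 : ∀ p, Φ (p, r) = (D r).indicator c p * φ r := by
              intro p
              simp only [hΦ_def]
              by_cases hp : p ∈ D r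
              · rw [Set.indicator_of_mem hp, Set.indicator_of_mem ((hmemA p r).2 hp)]
              · rw [Set.indicator_of_notMem hp,
                  Set.indicator_of_notMem (fun hq => hp ((hmemA p r).1 hq)), zero_mul]
            simp_rw [e3]
            rw [lintegral_mul_const _ (hcm.indicator (hD r))]
            exact mul_le_mul_left (hC r hr) (φ r)
          · have e4 : ∀ p : ℝ × ℝ, Φ (p, r) = 0 := by
              intro p
              simp only [hΦ_def]
              refine Set.indicator_of_notMem (fun (hq : (p, r) ∈ A) => hr ?_) _
              exact ⟨le_trans (le_min hq.1.1.1 hq.1.2.1) hq.2.1.le,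
                le_trans hq.2.2 (max_le hq.1.1.2 hq.1.2.2)⟩
            simp [e4]
      _ = C * ∫⁻ r in Set.Icc 0 T, φ r := by
          rw [lintegral_const_mul _ (hφm.indicator measurableSet_Icc),
            lintegral_indicator measurableSet_Icc]
      _ < ⊤ := ENNReal.mul_lt_top hCne.lt_top hg.lintegral_lt_top

/-- Lemma 3.8: for nonnegative `g ∈ L¹(0,T)` and `δ < 2`, `δ ≠ 1`, the double integral
`∫₀ᵀ∫₀ᵀ |t-s|^{-δ} ∫_{t∧s}^{t∨s} g(r) dr dt ds` is finite. -/
theorem stmt_0 (T : ℝ) (hT : 0 < T) (δ : ℝ) (hδ : δ < 2) (hδ1 : δ ≠ 1)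
    (g : ℝ → ℝ) (hg : IntegrableOn g (Set.Icc 0 T)) (hg0 : ∀ r, 0 ≤ g r) :
    IntegrableOn
      (fun p : ℝ × ℝ => |p.1 - p.2| ^ (-δ) * ∫ r in (min p.1 p.2)..(max p.1 p.2), g r)
      (Set.Icc 0 T ×ˢ Set.Icc 0 T) := by
  set g₁ : ℝ → ℝ := fun x => max (hg.1.mk g x) 0 with hg₁_def
  have hg₁m : Measurable g₁ := hg.1.stronglyMeasurable_mk.measurable.max measurable_const
  have hg₁0 : ∀ r, 0 ≤ g₁ r := fun r => le_max_right _ _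
  have heq : g =ᵐ[volume.restrict (Set.Icc 0 T)] g₁ := by
    filter_upwards [hg.1.ae_eq_mk] with x hx
    rw [hg₁_def]
    dsimp only
    rw [← hx, max_eq_left (hg0 x)]
  have hg₁ : IntegrableOn g₁ (Set.Icc 0 T) := hg.congr heq
  have main := aux T hT δ hδ g₁ hg₁m hg₁ hg₁0
  refine main.congr_fun ?_ (measurableSet_Icc.prod measurableSet_Icc)
  intro p hp
  dsimp only
  congr 1
  refine intervalIntegral.integral_congr_ae ?_
  have h' : ∀ᵐ x ∂volume, x ∈ Set.Icc (0:ℝ) T → g x = g₁ x :=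
    (ae_restrict_iff' measurableSet_Icc).1 heq
  filter_upwards [h'] with x hx hxm
  rw [Set.uIoc_of_le min_le_max] at hxm
  have hxI : x ∈ Set.Icc (0:ℝ) T :=
    ⟨le_trans (le_min hp.1.1 hp.2.1) hxm.1.le, le_trans hxm.2 (max_le hp.1.2 hp.2.2)⟩
  exact (hx hxI).symm
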